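/- Under the hypotheses of the growth lemma (Σ((k+ℓ)N) ≤ q Σ(N) for some 0 < q < k+ℓ, Σ nondecreasing, Σ(N) ≤ 2N+1), one has (1/N)·Σ(N) → 0 as N → ∞. -/

import Mathlib

open Filter

/-- if `Σ : ℕ → ℝ` is nonnegative, nondecreasing, satisfies
`Σ(N) ≤ 2N+1` and `Σ(bN) ≤ q Σ(N)` for all `N ≥ 1` with `0 < q < b` and
integer `b ≥ 2`, then `Σ(N)/N → 0`. -/
theorem sigma_over_N_tendsto_zero (b : ℕ) (hb : 2 ≤ b) (q : ℝ)
    (hq0 : 0 < q) (hqb : q < (b : ℝ)) (Sig : ℕ → ℝ)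
    (hnonneg : ∀ N, 0 ≤ Sig N) (hmono : Monotone Sig)
    (hbound : ∀ N, Sig N ≤ 2 * N + 1)
    (hgrowth : ∀ N : ℕ, 1 ≤ N → Sig (b * N) ≤ q * Sig N) :
    Tendsto (fun N : ℕ => Sig N / N) atTop (nhds 0) := by
  have hb1 : 1 < b := hb
  have hbR : (0:ℝ) < b := by positivity
  -- Sig (b^j) ≤ q^j * Sig 1
  have hpow : ∀ j : ℕ, Sig (b ^ j) ≤ q ^ j * Sig 1 := by
    intro j
    induction j with
    | zero => simp
    | succ j ih =>
      have h1 : 1 ≤ b ^ j := Nat.one_le_pow _ _ (by omega)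
      calc Sig (b ^ (j+1)) = Sig (b * b ^ j) := by ring_nf
        _ ≤ q * Sig (b ^ j) := hgrowth _ h1
        _ ≤ q * (q ^ j * Sig 1) := by
            exact mul_le_mul_of_nonneg_left ih hq0.le
        _ = q ^ (j+1) * Sig 1 := by ring
  -- the dominating function
  set g : ℕ → ℝ := fun N => q * Sig 1 * (q / b) ^ (Nat.log b N) with hg
  have hqb01 : q / b < 1 := (div_lt_one hbR).2 hqb
  have hqb00 : 0 ≤ q / b := by positivity
  have hlog : Tendsto (fun N : ℕ => Nat.log b N) atTop atTop := by
    apply tendsto_atTop_atTop.2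
    intro k
    refine ⟨b ^ k, fun N hN => ?_⟩
    have hN0 : N ≠ 0 := by have := Nat.one_le_pow k b (by omega); omega
    exact (Nat.le_log_iff_pow_le hb1 hN0).2 hN
  have hgtend : Tendsto g atTop (nhds 0) := by
    have h1 : Tendsto (fun n : ℕ => (q / b) ^ n) atTop (nhds 0) :=
      tendsto_pow_atTop_nhds_zero_of_lt_one hqb00 hqb01
    have h2 : Tendsto (fun N : ℕ => (q / b) ^ (Nat.log b N)) atTop (nhds 0) :=
      h1.comp hlog
    have := h2.const_mul (q * Sig 1)
    simpa [hg, mul_comm] using this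
  apply squeeze_zero (fun N => div_nonneg (hnonneg N) (by positivity)) _ hgtend
  intro N
  rcases Nat.eq_zero_or_pos N with h0 | hN
  · subst h0
    simp only [Nat.cast_zero, div_zero]
    have : 0 ≤ Sig 1 := hnonneg 1
    simp [hg]
    positivity
  · set j := Nat.log b N with hj
    have hlow : (b:ℝ) ^ j ≤ N := by
      exact_mod_cast Nat.pow_log_le_self b (by omega)
    have hhigh : N < b ^ (j + 1) := Nat.lt_pow_succ_log_self hb1 N
    have hNpos : (0:ℝ) < N := by exact_mod_cast hN
    have hbjpos : (0:ℝ) < (b:ℝ) ^ j := by positivity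
    have h1 : Sig N ≤ q ^ (j+1) * Sig 1 :=
      le_trans (hmono hhigh.le) (hpow (j+1))
    calc Sig N / N ≤ (q ^ (j+1) * Sig 1) / (b:ℝ) ^ j :=
          div_le_div₀ (mul_nonneg (by positivity) (hnonneg 1)) h1 hbjpos hlow
      _ = q * Sig 1 * (q / b) ^ j := by
          rw [div_pow]
          field_simp
          ring
      _ = g N := rfl
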